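/- Let T be a reduced set of permutations such that for every σ ∈ T, the permutation σ̂ (obtained from σ by swapping its first two entries) also lies in T. Then the map s_T on S_n is a bijection, with inverse r ∘ s_T ∘ r, where r is the reverse operation. -/

import Mathlib

open List

attribute [local instance] Classical.propDecidable

/-- `u` is order-isomorphic to `v`. -/
def OrdIso (u v : List ℕ) : Prop :=
  u.length = v.length ∧
    ∀ i j, i < u.length → j < u.length →
      (u.getD i 0 < u.getD j 0 ↔ v.getD i 0 < v.getD j 0)

/-- The word `w` contains the pattern `p`. -/
def Contains (w p : List ℕ) : Prop :=
  ∃ u, u.Sublist w ∧ OrdIso u p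

/-- The word `w` avoids every pattern in `T`. -/
def AvoidsSet (T : Set (List ℕ)) (w : List ℕ) : Prop :=
  ∀ p ∈ T, ¬ Contains w p

/-- One step of the `T`-avoiding stack machine: state is (input, stack, output);
the stack is read top to bottom (head is the top). -/
noncomputable def sTaux (T : Set (List ℕ)) : List ℕ → List ℕ → List ℕ → List ℕ
  | [], stack, out => out ++ stack
  | x :: rest, stack, out =>
    if AvoidsSet T (x :: stack) then sTaux T rest (x :: stack) out
    else
      match stack with
      | [] => sTaux T rest [x] out
      | y :: s => sTaux T (x :: rest) s (out ++ [y])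
termination_by input stack _ => 2 * input.length + stack.length
decreasing_by all_goals first | (simp_wf; omega) | omega | simp_wf

/-- The stack-sorting map `s_T`. -/
noncomputable def sT (T : Set (List ℕ)) (w : List ℕ) : List ℕ := sTaux T w [] []

/-- `w` is a permutation of `{1, …, w.length}`. -/
def IsPermList (w : List ℕ) : Prop := w.Perm (List.range' 1 w.length)

/-- `T` is reduced: no element of `T` contains another element of `T`. -/
def Reduced (T : Set (List ℕ)) : Prop :=
  ∀ σ ∈ T, ∀ τ ∈ T, σ ≠ τ → ¬ Contains σ τ

/-- `σ̂`: swap the first two entries of `σ`. -/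
def hat : List ℕ → List ℕ
  | a :: b :: t => b :: a :: t
  | l => l

section Aux

variable {T : Set (List ℕ)}

lemma sTaux_nil (T : Set (List ℕ)) (st out : List ℕ) : sTaux T [] st out = out ++ st := by
  rw [sTaux.eq_def]

lemma sTaux_push (T : Set (List ℕ)) (x : ℕ) (r st out : List ℕ) (h : AvoidsSet T (x::st)) :
    sTaux T (x::r) st out = sTaux T r (x::st) out := by
  rw [sTaux.eq_def]; dsimp only; rw [if_pos h]

lemma sTaux_pop (T : Set (List ℕ)) (x y : ℕ) (r s out : List ℕ) (h : ¬AvoidsSet T (x::y::s)) :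
    sTaux T (x::r) (y::s) out = sTaux T (x::r) s (out ++ [y]) := by
  rw [sTaux.eq_def]; dsimp only; rw [if_neg h]

lemma sTaux_push0 (T : Set (List ℕ)) (x : ℕ) (r out : List ℕ) (h : ¬AvoidsSet T (x::[])) :
    sTaux T (x::r) [] out = sTaux T r [x] out := by
  rw [sTaux.eq_def]; dsimp only; rw [if_neg h]

lemma contains_mono {w w' p : List ℕ} (hs : w.Sublist w') (h : Contains w p) : Contains w' p := by
  obtain ⟨u, hu, hiso⟩ := h; exact ⟨u, hu.trans hs, hiso⟩

lemma avoids_mono {w w' : List ℕ} (h : AvoidsSet T w') (hs : w.Sublist w') : AvoidsSet T w :=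
  fun p hp hc => h p hp (contains_mono hs hc)

lemma avoids_short (hlen2 : ∀ p ∈ T, 2 ≤ p.length) {w : List ℕ} (hw : w.length ≤ 1) :
    AvoidsSet T w := by
  rintro p hp ⟨u, hs, hiso⟩
  obtain ⟨hl, -⟩ := hiso
  have := hs.length_le
  have := hlen2 p hp
  omega

lemma ordiso_swap {a b : ℕ} {v σ : List ℕ} (h : OrdIso (a::b::v) σ) :
    OrdIso (b::a::v) (hat σ) := by
  obtain ⟨hlen, hcomp⟩ := h
  match σ, hlen with
  | [], hlen => simp at hlen
  | [c], hlen => simp at hlen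
  | c :: d :: t, hlen =>
    show OrdIso (b::a::v) (d::c::t)
    refine ⟨by simpa using hlen, ?_⟩
    intro i j hi hj
    set sw : ℕ → ℕ := fun k => if k = 0 then 1 else if k = 1 then 0 else k with hsw
    have e1 : ∀ (x y : ℕ) (l : List ℕ) (k : ℕ),
        (y::x::l).getD k 0 = (x::y::l).getD (sw k) 0 := by
      intro x y l k
      match k with
      | 0 => simp [hsw]
      | 1 => simp [hsw]
      | (n+2) => simp [hsw]
    simp only [length_cons] at hi hj hlen
    have hb : ∀ k, k < v.length + 1 + 1 → sw k < v.length + 1 + 1 := by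
      intro k hk; simp only [hsw]; split_ifs <;> omega
    rw [e1 a b v i, e1 a b v j, e1 c d t i, e1 c d t j]
    exact hcomp (sw i) (sw j) (by simpa using hb i hi) (by simpa using hb j hj)

lemma key_lemma (hhat : ∀ σ ∈ T, hat σ ∈ T) {z x : ℕ} {S : List ℕ}
    (hz : AvoidsSet T (z::S)) (hx : AvoidsSet T (x::S))
    (h : ¬ AvoidsSet T (x::z::S)) : ¬ AvoidsSet T (z::x::S) := by
  have hex : ∃ p ∈ T, Contains (x::z::S) p := by
    by_contra hc; push_neg at hc; exact h fun p hp => hc p hp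
  obtain ⟨σ, hσ, u, hsub, hiso⟩ := hex
  cases hsub with
  | cons _ h1 => exact absurd ⟨u, h1, hiso⟩ (hz σ hσ)
  | cons_cons _ h1 =>
    cases h1 with
    | cons _ h2 => exact absurd ⟨_, h2.cons₂ x, hiso⟩ (hx σ hσ)
    | cons_cons _ h2 =>
      intro hav
      exact hav (hat σ) (hhat σ hσ) ⟨_, (h2.cons₂ x).cons₂ z, ordiso_swap hiso⟩

lemma deg_fail {p : List ℕ} (hp : p ∈ T) (hlen : p.length ≤ 1) (x : ℕ) (s : List ℕ) :
    ¬ AvoidsSet T (x::s) := by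
  intro h
  apply h p hp
  match p, hlen with
  | [], _ => exact ⟨[], List.nil_sublist _, rfl, fun i j hi hj => by simp at hi⟩
  | [a], _ =>
    refine ⟨[x], (List.nil_sublist s).cons₂ x, rfl, fun i j hi hj => ?_⟩
    simp only [length_cons, length_nil] at hi hj
    have hi0 : i = 0 := by omega
    have hj0 : j = 0 := by omega
    subst hi0; subst hj0; simp

lemma deg_id (hfail : ∀ (x : ℕ) (s : List ℕ), ¬ AvoidsSet T (x::s)) :
    ∀ (inp out : List ℕ), sTaux T inp [] out = out ++ inp := by
  intro inp
  induction inp with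
  | nil => intro out; simp [sTaux_nil]
  | cons x rest ih =>
    intro out
    rw [sTaux_push0 _ _ _ _ (hfail x [])]
    cases rest with
    | nil => simp [sTaux_nil]
    | cons z r2 =>
      rw [sTaux_pop _ _ _ _ _ _ (hfail z [x]), ih]
      simp

lemma outfact : ∀ (n : ℕ) (inp st out : List ℕ), 2 * inp.length + st.length ≤ n →
    sTaux T inp st out = out ++ sTaux T inp st [] := by
  intro n
  induction n with
  | zero =>
    intro inp st out hm
    match inp with
    | [] => rw [sTaux_nil, sTaux_nil]; rfl
    | x :: r => simp only [length_cons] at hm; omega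
  | succ m ih =>
    intro inp st out hm
    match inp with
    | [] => rw [sTaux_nil, sTaux_nil]; rfl
    | x :: r =>
      by_cases hx : AvoidsSet T (x :: st)
      · rw [sTaux_push _ _ _ _ _ hx, sTaux_push _ _ _ _ _ hx]
        exact ih r (x::st) out (by simp only [length_cons] at hm ⊢; omega)
      · match st with
        | [] =>
          rw [sTaux_push0 _ _ _ _ hx, sTaux_push0 _ _ _ _ hx]
          exact ih r [x] out (by simp only [length_cons] at hm ⊢; omega)
        | y :: s =>
          rw [sTaux_pop _ _ _ _ _ _ hx, sTaux_pop _ _ _ _ _ _ hx]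
          rw [ih (x::r) s (out ++ [y]) (by simp only [length_cons] at hm ⊢; omega),
              ih (x::r) s ([] ++ [y]) (by simp only [length_cons] at hm ⊢; omega)]
          simp

lemma dump : ∀ (l S₂ rest acc : List ℕ), AvoidsSet T (l.reverse ++ S₂) →
    sTaux T (l ++ rest) S₂ acc = sTaux T rest (l.reverse ++ S₂) acc := by
  intro l
  induction l with
  | nil => intro S₂ rest acc h; simp
  | cons y l' ih =>
    intro S₂ rest acc h
    simp only [reverse_cons, append_assoc, singleton_append] at h ⊢
    have hy : AvoidsSet T (y :: S₂) :=
      avoids_mono h (List.sublist_append_right _ _)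
    rw [cons_append, sTaux_push _ _ _ _ _ hy]
    exact ih (y::S₂) rest acc h

lemma main_lemma (hhat : ∀ σ ∈ T, hat σ ∈ T) (hlen2 : ∀ p ∈ T, 2 ≤ p.length) :
    ∀ (n : ℕ) (inp S rest acc : List ℕ), 2 * inp.length + S.length ≤ n →
      AvoidsSet T S →
      (∀ z rest', rest = z :: rest' →
        ¬ AvoidsSet T (z :: S) ∨
          ∃ w w', inp = w :: w' ∧ ¬ AvoidsSet T (w :: z :: S) ∧ AvoidsSet T (z :: S)) →
      sTaux T ((sTaux T inp S []).reverse ++ rest) [] acc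
        = sTaux T rest S (acc ++ inp.reverse) := by
  have base : ∀ (S rest acc : List ℕ), AvoidsSet T S →
      sTaux T ((sTaux T [] S []).reverse ++ rest) [] acc
        = sTaux T rest S (acc ++ [].reverse) := by
    intro S rest acc hS
    rw [sTaux_nil]
    have := dump (T := T) S.reverse [] rest acc (by simpa using hS)
    simpa using this
  intro n
  induction n with
  | zero =>
    intro inp S rest acc hm hS _
    match inp with
    | [] => exact base S rest acc hS
    | x :: r => simp only [length_cons] at hm; omega
  | succ m ih =>
    intro inp S rest acc hm hS hpend
    match inp with
    | [] => exact base S rest acc hS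
    | x :: rin =>
      by_cases hx : AvoidsSet T (x :: S)
      · -- push step
        have hxs : ∀ z rest', rest = z :: rest' → ¬ AvoidsSet T (z :: x :: S) := by
          intro z rest' hr
          rcases hpend z rest' hr with h | ⟨w, w', heq, hwz, hzS⟩
          · exact fun hc => h (avoids_mono hc ((List.sublist_cons_self x S).cons₂ z))
          · injection heq with h1 h2
            subst h1; subst h2
            exact key_lemma hhat hzS hx hwz
        rw [sTaux_push _ _ _ _ _ hx]
        rw [ih rin (x::S) rest acc (by simp only [length_cons] at hm ⊢; omega) hx
          (fun z rest' hr => Or.inl (hxs z rest' hr))]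
        match rest with
        | [] =>
          rw [sTaux_nil, sTaux_nil]
          simp
        | z :: rest' =>
          rw [sTaux_pop _ _ _ _ _ _ (hxs z rest' rfl), reverse_cons, append_assoc]
      · -- pop step
        match S, hS, hx, hpend, hm with
        | [], hS, hx, hpend, hm =>
          exact absurd (avoids_short hlen2 (by simp)) hx
        | y :: S₂, hS, hx, hpend, hm =>
          have hS₂ : AvoidsSet T S₂ := avoids_mono hS (List.sublist_cons_self y S₂)
          rw [sTaux_pop _ _ _ _ _ _ hx]
          rw [outfact (2 * (x::rin).length + S₂.length) (x::rin) S₂ ([] ++ [y]) le_rfl]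
          rw [reverse_append]
          have hstep : (sTaux T (x::rin) S₂ []).reverse ++ (([] ++ [y] : List ℕ)).reverse ++ rest
              = (sTaux T (x::rin) S₂ []).reverse ++ (y :: rest) := by
            rw [append_assoc]; rfl
          rw [hstep]
          rw [ih (x::rin) S₂ (y::rest) acc (by simp only [length_cons] at hm ⊢; omega) hS₂
            (by
              intro z rest' hr
              injection hr with h1 h2
              subst h1; subst h2
              exact Or.inr ⟨x, rin, rfl, hx, hS⟩)]
          rw [sTaux_push _ _ _ _ _ hS]

lemma key2 (hhat : ∀ σ ∈ T, hat σ ∈ T) (w : List ℕ) :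
    sT T ((sT T w).reverse) = w.reverse := by
  by_cases hdeg : ∃ p ∈ T, p.length ≤ 1
  · obtain ⟨p, hp, hl⟩ := hdeg
    have hid : ∀ v : List ℕ, sT T v = v := by
      intro v
      have := deg_id (fun x s => deg_fail hp hl x s) v []
      simpa [sT] using this
    rw [hid, hid]
  · have hlen2 : ∀ p ∈ T, 2 ≤ p.length := by
      intro p hp
      by_contra hcon
      exact hdeg ⟨p, hp, by omega⟩
    have h := main_lemma hhat hlen2 (2 * w.length) w [] [] [] (by simp)
      (avoids_short hlen2 (by simp)) (by intro z r hzr; cases hzr)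
    rw [append_nil] at h
    rw [sTaux_nil] at h
    simpa [sT] using h

lemma sTaux_perm : ∀ (n : ℕ) (inp st out : List ℕ), 2 * inp.length + st.length ≤ n →
    (sTaux T inp st out).Perm (out ++ st ++ inp) := by
  intro n
  induction n with
  | zero =>
    intro inp st out hm
    match inp with
    | [] => rw [sTaux_nil]; simp
    | x :: r => simp only [length_cons] at hm; omega
  | succ m ih =>
    intro inp st out hm
    match inp with
    | [] => rw [sTaux_nil]; simp
    | x :: r =>
      by_cases hx : AvoidsSet T (x :: st)
      · rw [sTaux_push _ _ _ _ _ hx]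
        refine (ih r (x::st) out (by simp only [length_cons] at hm ⊢; omega)).trans ?_
        have h1 : out ++ x :: st ++ r = out ++ (x :: (st ++ r)) := by simp
        have h2 : out ++ st ++ (x :: r) = out ++ (st ++ x :: r) := by simp
        rw [h1, h2]
        exact List.Perm.append_left out List.perm_middle.symm
      · match st with
        | [] =>
          rw [sTaux_push0 _ _ _ _ hx]
          have := ih r [x] out (by simp only [length_cons] at hm ⊢; omega)
          refine this.trans ?_
          simp
        | y :: s =>
          rw [sTaux_pop _ _ _ _ _ _ hx]
          have := ih (x::r) s (out ++ [y]) (by simp only [length_cons] at hm ⊢; omega)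
          refine this.trans ?_
          simp

lemma sT_perm (T : Set (List ℕ)) (w : List ℕ) : (sT T w).Perm w := by
  have := sTaux_perm (T := T) (2 * w.length) w [] [] (by simp)
  simpa [sT] using this

end Aux

/-- If `T` is reduced and closed under `σ ↦ σ̂`, then `s_T` is a bijection on `S_n`
with inverse `r ∘ s_T ∘ r`. -/
theorem stmt3 (T : Set (List ℕ)) (hred : Reduced T)
    (hhat : ∀ σ ∈ T, hat σ ∈ T) (n : ℕ) :
    Set.BijOn (sT T) {w | IsPermList w ∧ w.length = n}
      {w | IsPermList w ∧ w.length = n} ∧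
    (∀ π : List ℕ, IsPermList π → π.length = n →
      (sT T ((sT T π).reverse)).reverse = π) ∧
    (∀ π : List ℕ, IsPermList π → π.length = n →
      sT T ((sT T π.reverse).reverse) = π) := by
  have key2' := key2 (T := T) hhat
  have hperm : ∀ w : List ℕ, (sT T w).Perm w := sT_perm T
  have hmem : ∀ w : List ℕ, (IsPermList w ∧ w.length = n) →
      (IsPermList (sT T w) ∧ (sT T w).length = n) := by
    rintro w ⟨h1, h2⟩
    have hlen : (sT T w).length = w.length := (hperm w).length_eq
    refine ⟨?_, by omega⟩
    unfold IsPermList at *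
    rw [hlen]
    exact (hperm w).trans h1
  have hrevmem : ∀ w : List ℕ, IsPermList w → IsPermList w.reverse := by
    intro w h
    unfold IsPermList at *
    rw [length_reverse]
    exact (reverse_perm w).trans h
  have bullet2 : ∀ π : List ℕ, (sT T ((sT T π).reverse)).reverse = π := by
    intro π
    rw [key2' π, reverse_reverse]
  have bullet3 : ∀ π : List ℕ, sT T ((sT T π.reverse).reverse) = π := by
    intro π
    have := key2' π.reverse
    rwa [reverse_reverse] at this
  refine ⟨⟨?_, ?_, ?_⟩, fun π _ _ => bullet2 π, fun π _ _ => bullet3 π⟩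
  · intro w hw
    exact hmem w hw
  · intro a _ b _ hab
    rw [← bullet2 a, ← bullet2 b, hab]
  · intro ω hω
    refine ⟨(sT T ω.reverse).reverse, ?_, bullet3 ω⟩
    obtain ⟨hω1, hω2⟩ := hω
    have h1 : IsPermList ω.reverse := hrevmem ω hω1
    have h2 := hmem ω.reverse ⟨h1, by simpa using hω2⟩
    exact ⟨hrevmem _ h2.1, by simpa using h2.2⟩
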